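/- arXiv:1207.0463 — 4 statements merged into one kernel-verified Lean document; each statement's English description precedes it below -/
import Mathlib

section
/- For 0 < c < 1 and real x with x > (1+√c)/(1-√c), both roots of the quadratic E^2 + [(1/x)(1/c - 1) - (1/c + 1)]E + 1/c = 0 are real and positive. -/
/-- For `0 < c < 1` and `x > (1+√c)/(1-√c)`, both roots of
`E^2 + ((1/x)(1/c-1) - (1/c+1))E + 1/c = 0` are real and positive. -/
theorem stmt3 (c x : ℝ) (hc0 : 0 < c) (hc1 : c < 1)
    (hx : (1 + Real.sqrt c)/(1 - Real.sqrt c) < x) :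
    ∀ E : ℂ, E^2 + (((1/x) * (1/c - 1) - (1/c + 1) : ℝ) : ℂ) * E + ((1/c : ℝ) : ℂ) = 0 →
      ∃ r : ℝ, 0 < r ∧ E = (r : ℂ) := by
  set s := Real.sqrt c with hs
  have hs0 : 0 < s := Real.sqrt_pos.mpr hc0
  have hs1 : s < 1 := by
    rw [hs, show (1:ℝ) = Real.sqrt 1 by simp]
    exact Real.sqrt_lt_sqrt hc0.le hc1
  have hsc : s ^ 2 = c := Real.sq_sqrt hc0.le
  clear_value s
  have hx' : (1 + s) < x * (1 - s) := by
    have := (div_lt_iff₀ (by linarith : (0:ℝ) < 1 - s)).mp hx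
    linarith
  have hx0 : 0 < x := by nlinarith
  set b : ℝ := (1/x) * (1/c - 1) - (1/c + 1) with hbdef
  clear_value b
  have hb0 : b < 0 := by
    have h1 : (1/x) * (1/c - 1) < 1/c + 1 := by
      rw [div_mul_eq_mul_div, div_lt_iff₀ hx0]
      have : 0 < 1/c := by positivity
      nlinarith
    rw [hbdef]; linarith
  have hdisc : b ^ 2 - 4 * (1/c) ≥ 0 := by
    have hbx' : b * (x * c) = (1 - c) - (1 + c) * x := by
      rw [hbdef]; field_simp
    have hkey : -b ≥ 2 / s := by
      rw [ge_iff_le, div_le_iff₀ hs0]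
      have hxc : 0 < x * c := by positivity
      rw [← mul_le_mul_iff_of_pos_right hxc]
      have e : -b * s * (x * c) = s * ((1 + c) * x - (1 - c)) := by
        linear_combination (-s) * hbx'
      rw [e]
      nlinarith [mul_nonneg (mul_pos hs0 (by linarith : (0:ℝ) < 1 - s)).le
        (by linarith : (0:ℝ) ≤ x * (1 - s) - (1 + s)), hsc]
    have h2s : (2 / s) ^ 2 = 4 * (1/c) := by
      rw [div_pow, ← hsc]; field_simp; norm_num
    have h2s0 : 0 < 2 / s := by positivity
    nlinarith [hkey, h2s, h2s0]
  intro E hE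
  have hre : E.re ^ 2 - E.im ^ 2 + b * E.re + 1/c = 0 := by
    have := congrArg Complex.re hE
    simpa [Complex.add_re, Complex.mul_re, pow_two, Complex.add_im, Complex.mul_im] using this
  have him : 2 * E.re * E.im + b * E.im = 0 := by
    have := congrArg Complex.im hE
    simp [Complex.add_im, Complex.mul_im, pow_two, Complex.mul_re] at this
    linarith
  set a := E.re with ha
  set t := E.im with htdef
  clear_value a t
  have ht0 : t = 0 := by
    by_contra ht
    have h2ab : 2 * a + b = 0 := by
      have : t * (2 * a + b) = 0 := by linarith [him]
      rcases mul_eq_zero.mp this with h | h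
      · exact absurd h ht
      · exact h
    have ha' : a = -b/2 := by linarith
    have ht2 : 0 < t ^ 2 := by positivity
    rw [ha'] at hre
    nlinarith [hdisc, hre, ht2]
  have hre' : a ^ 2 + b * a + 1/c = 0 := by
    rw [ht0] at hre; linarith [hre]
  have hapos : 0 < a := by
    by_contra h
    push_neg at h
    have hba : 0 ≤ b * a := by nlinarith [mul_nonneg (neg_nonneg.mpr hb0.le) (neg_nonneg.mpr h)]
    have hc' : 0 < 1/c := by positivity
    nlinarith
  exact ⟨a, hapos, by rw [Complex.ext_iff]; constructor <;> simp [← ha, ← htdef, ht0]⟩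
end

section
/- Suppose a two-valued algebraic function E on the Riemann sphere has a simple zero at z=0 on one sheet, a simple pole at z=0 on the other sheet, and behaves as E = 1 + 1/z + o(1/z) on sheet 0 and E = (1/c)(1 - 1/z) + o(1/z) on sheet 1 as z → ∞. Then the product of the two branches equals 1/c and their sum equals (1/c + 1) - (1/z)(1/c - 1); consequently E satisfies E^2 + [(1/z)(1/c - 1) - (1/c + 1)]E + 1/c = 0. -/
open Asymptotics Bornology Filter

open Polynomial in
lemma auxA : ∀ (K : ℕ) (N : Polynomial ℂ) (L : ℂ),
    Tendsto (fun z => N.eval z / z ^ K) (nhdsWithin 0 {(0:ℂ)}ᶜ) (nhds L) →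
    (X : Polynomial ℂ) ^ K ∣ N := by
  intro K
  induction K with
  | zero => intro N L _; simp
  | succ K ih =>
    intro N L h
    have hne : ∀ᶠ z in nhdsWithin (0:ℂ) {(0:ℂ)}ᶜ, z ≠ 0 := by
      filter_upwards [self_mem_nhdsWithin] with z hz using hz
    have hpow : Tendsto (fun z : ℂ => z ^ (K+1)) (nhdsWithin 0 {(0:ℂ)}ᶜ) (nhds 0) := by
      have := ((continuous_pow (K+1)).tendsto (0:ℂ)).mono_left
        (nhdsWithin_le_nhds (s := {(0:ℂ)}ᶜ))
      simpa using this
    have h0 : N.eval 0 = 0 := by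
      have h1 : Tendsto (fun z : ℂ => N.eval z / z ^ (K+1) * z ^ (K+1))
          (nhdsWithin 0 {(0:ℂ)}ᶜ) (nhds (L * 0)) := h.mul hpow
      have h2 : Tendsto (fun z : ℂ => N.eval z) (nhdsWithin 0 {(0:ℂ)}ᶜ) (nhds 0) := by
        rw [mul_zero] at h1
        apply h1.congr'
        filter_upwards [hne] with z hz
        field_simp
      have h3 : Tendsto (fun z : ℂ => N.eval z) (nhdsWithin 0 {(0:ℂ)}ᶜ) (nhds (N.eval 0)) :=
        (N.continuous_aeval.tendsto 0).mono_left nhdsWithin_le_nhds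
      exact tendsto_nhds_unique h3 h2
    obtain ⟨N', hN'⟩ : (X : Polynomial ℂ) ∣ N := X_dvd_iff.mpr (by
      rwa [coeff_zero_eq_eval_zero])
    have hN'lim : Tendsto (fun z => N'.eval z / z ^ K) (nhdsWithin 0 {(0:ℂ)}ᶜ) (nhds L) := by
      apply h.congr'
      filter_upwards [hne] with z hz
      rw [hN']
      simp only [eval_mul, eval_X, pow_succ']
      exact mul_div_mul_left _ _ hz
    have := ih N' L hN'lim
    rw [hN', pow_succ']
    exact mul_dvd_mul_left X this

lemma auxB (p : Polynomial ℂ) (h : Tendsto (fun z => p.eval z) (cobounded ℂ) (nhds 0)) :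
    p = 0 := by
  by_contra hp
  rcases lt_or_ge 0 p.degree with hd | hd
  · have h1 := p.tendsto_norm_atTop hd (z := id) tendsto_norm_cobounded_atTop
    exact not_tendsto_nhds_of_tendsto_atTop h1 0 (by simpa using h.norm)
  · have hC : p = Polynomial.C (p.coeff 0) := Polynomial.eq_C_of_degree_le_zero hd
    have hc : Tendsto (fun _ : ℂ => p.coeff 0) (cobounded ℂ) (nhds 0) := by
      apply h.congr; intro z; rw [hC]; simp
    have := tendsto_nhds_unique tendsto_const_nhds hc
    exact hp (by rw [hC, this]; simp)

/-- If a two-valued algebraic function `E = (E0, E1)` has a simple zero of `E0` at `0`,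
a simple pole of `E1` at `0`, rational symmetric functions (with pole only possibly at `0`),
and behaves as `E0 = 1 + 1/z + o(1/z)`, `E1 = (1/c)(1 - 1/z) + o(1/z)` at infinity, then
`E0·E1 = 1/c`, `E0 + E1 = (1/c+1) - (1/z)(1/c-1)`, and both branches satisfy the quadratic
`E^2 + ((1/z)(1/c-1) - (1/c+1))E + 1/c = 0`. -/
theorem stmt5 (c : ℝ) (hc0 : 0 < c) (hc1 : c < 1) (E0 E1 : ℂ → ℂ)
    (hsum_rat : ∃ (P : Polynomial ℂ) (n : ℕ), ∀ z : ℂ, z ≠ 0 →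
      E0 z + E1 z = P.eval z / z ^ n)
    (hprod_rat : ∃ (Q : Polynomial ℂ) (m : ℕ), ∀ z : ℂ, z ≠ 0 →
      E0 z * E1 z = Q.eval z / z ^ m)
    (hzero : ∃ α : ℂ, α ≠ 0 ∧
      Filter.Tendsto (fun z => E0 z / z) (nhdsWithin 0 {(0:ℂ)}ᶜ) (nhds α))
    (hpole : ∃ β : ℂ, β ≠ 0 ∧
      Filter.Tendsto (fun z => z * E1 z) (nhdsWithin 0 {(0:ℂ)}ᶜ) (nhds β))
    (hE0infty : (fun z => E0 z - (1 + 1/z)) =o[cobounded ℂ] (fun z => 1/z))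
    (hE1infty : (fun z => E1 z - (1/(c:ℂ)) * (1 - 1/z)) =o[cobounded ℂ] (fun z => 1/z)) :
    ∀ z : ℂ, z ≠ 0 →
      E0 z * E1 z = 1/(c:ℂ) ∧
      E0 z + E1 z = (1/(c:ℂ) + 1) - (1/z) * (1/(c:ℂ) - 1) ∧
      (E0 z)^2 + ((1/z) * (1/(c:ℂ) - 1) - (1/(c:ℂ) + 1)) * E0 z + 1/(c:ℂ) = 0 ∧
      (E1 z)^2 + ((1/z) * (1/(c:ℂ) - 1) - (1/(c:ℂ) + 1)) * E1 z + 1/(c:ℂ) = 0 := by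
  obtain ⟨P, n, hP⟩ := hsum_rat
  obtain ⟨Q, m, hQ⟩ := hprod_rat
  obtain ⟨α, hα, hα0⟩ := hzero
  obtain ⟨β, hβ, hβ0⟩ := hpole
  set γ : ℂ := 1/(c:ℂ) with hγ
  have hne0 : ∀ᶠ z : ℂ in cobounded ℂ, z ≠ 0 := eventually_ne_cobounded 0
  have hne0' : ∀ᶠ z in nhdsWithin (0:ℂ) {(0:ℂ)}ᶜ, z ≠ 0 := by
    filter_upwards [self_mem_nhdsWithin] with z hz using hz
  have hinv0 : Tendsto (fun z : ℂ => 1/z) (cobounded ℂ) (nhds 0) := by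
    rw [tendsto_zero_iff_norm_tendsto_zero]
    simpa [one_div, norm_inv] using
      ((tendsto_norm_cobounded_atTop (E := ℂ)).inv_tendsto_atTop).congr (fun x => Pi.inv_apply _ x)
  -- O(1) facts at infinity
  have hAO : (fun z : ℂ => 1 + 1/z) =O[cobounded ℂ] (fun _ => (1:ℂ)) :=
    (tendsto_const_nhds.add hinv0).isBigO_one ℂ
  have hBt : Tendsto (fun z : ℂ => γ * (1 - 1/z)) (cobounded ℂ) (nhds (γ * (1 - 0))) :=
    tendsto_const_nhds.mul (tendsto_const_nhds.sub hinv0)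
  have hBO : (fun z : ℂ => γ * (1 - 1/z)) =O[cobounded ℂ] (fun _ => (1:ℂ)) :=
    hBt.isBigO_one ℂ
  have hE1O : E1 =O[cobounded ℂ] (fun _ => (1:ℂ)) := by
    have h1 : (fun z => E1 z - γ * (1 - 1/z)) =O[cobounded ℂ] (fun _ => (1:ℂ)) :=
      hE1infty.isBigO.trans (hinv0.isBigO_one ℂ)
    simpa using h1.add hBO
  -- product asymptotics at infinity
  have t1 : (fun z : ℂ => (E0 z - (1 + 1/z)) * E1 z) =o[cobounded ℂ] (fun z : ℂ => 1/z) := by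
    simpa using hE0infty.mul_isBigO hE1O
  have t2 : (fun z : ℂ => (1 + 1/z) * (E1 z - γ * (1 - 1/z))) =o[cobounded ℂ]
      (fun z : ℂ => 1/z) := by
    simpa using hAO.mul_isLittleO hE1infty
  have hzz : (fun z : ℂ => (1/z) * (1/z)) =o[cobounded ℂ] (fun z : ℂ => 1/z) := by
    simpa using ((isLittleO_one_iff ℂ).mpr hinv0).mul_isBigO
      (isBigO_refl (fun z : ℂ => 1/z) (cobounded ℂ))
  have t3 : (fun z : ℂ => (1 + 1/z) * (γ * (1 - 1/z)) - γ) =o[cobounded ℂ]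
      (fun z : ℂ => 1/z) :=
    ((hzz.const_mul_left (-γ)).congr_left (fun z => by ring))
  have hprod_o : (fun z : ℂ => E0 z * E1 z - γ) =o[cobounded ℂ] (fun z : ℂ => 1/z) :=
    ((t1.add t2).add t3).congr_left (fun z => by ring)
  have hsum_o : (fun z : ℂ => (E0 z + E1 z) - ((γ + 1) - (1/z) * (γ - 1))) =o[cobounded ℂ]
      (fun z : ℂ => 1/z) :=
    (hE0infty.add hE1infty).congr_left (fun z => by ring)
  -- tendsto of z * (f - g) to 0 at infinity
  have key : ∀ f : ℂ → ℂ, f =o[cobounded ℂ] (fun z : ℂ => 1/z) →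
      Tendsto (fun z : ℂ => z * f z) (cobounded ℂ) (nhds 0) := by
    intro f hf
    rw [← isLittleO_one_iff ℂ]
    have h1 : (fun z : ℂ => z * f z) =o[cobounded ℂ] (fun z : ℂ => z * (1/z)) :=
      (isBigO_refl (fun z : ℂ => z) _).mul_isLittleO hf
    apply h1.congr' EventuallyEq.rfl
    filter_upwards [hne0] with z hz
    field_simp
  have hprodT := key _ hprod_o
  have hsumT := key _ hsum_o
  -- limits at 0
  have h00 : Tendsto (fun z : ℂ => z) (nhdsWithin 0 {(0:ℂ)}ᶜ) (nhds 0) :=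
    (continuous_id.tendsto 0).mono_left (nhdsWithin_le_nhds (s := {(0:ℂ)}ᶜ))
  have hprod0 : Tendsto (fun z => E0 z * E1 z) (nhdsWithin 0 {(0:ℂ)}ᶜ) (nhds (α * β)) := by
    apply (hα0.mul hβ0).congr'
    filter_upwards [hne0'] with z hz
    field_simp
  have hprodT0 : Tendsto (fun z => z * (E0 z * E1 z - γ)) (nhdsWithin 0 {(0:ℂ)}ᶜ)
      (nhds (0 * (α * β - γ))) := h00.mul (hprod0.sub tendsto_const_nhds)
  have hE00 : Tendsto (fun z => z * E0 z) (nhdsWithin 0 {(0:ℂ)}ᶜ) (nhds (0 * 0 * α)) := by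
    apply ((h00.mul h00).mul hα0).congr'
    filter_upwards [hne0'] with z hz
    field_simp
  have hzg : Tendsto (fun z : ℂ => z * ((γ + 1) - (1/z) * (γ - 1)))
      (nhdsWithin 0 {(0:ℂ)}ᶜ) (nhds (0 * (γ + 1) - (γ - 1))) := by
    apply ((h00.mul tendsto_const_nhds).sub tendsto_const_nhds).congr'
    filter_upwards [hne0'] with z hz
    field_simp
  have hsumT0 : Tendsto (fun z => z * ((E0 z + E1 z) - ((γ + 1) - (1/z) * (γ - 1))))
      (nhdsWithin 0 {(0:ℂ)}ᶜ) (nhds ((0 * 0 * α + β) - (0 * (γ + 1) - (γ - 1)))) := by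
    apply ((hE00.add hβ0).sub hzg).congr'
    apply Eventually.of_forall
    intro z; ring
  -- rational pipeline
  have pipeline : ∀ (R : Polynomial ℂ) (k : ℕ) (f : ℂ → ℂ) (L : ℂ),
      (∀ z : ℂ, z ≠ 0 → R.eval z / z ^ k = z * f z) →
      Tendsto (fun z => z * f z) (nhdsWithin 0 {(0:ℂ)}ᶜ) (nhds L) →
      Tendsto (fun z => z * f z) (cobounded ℂ) (nhds 0) →
      ∀ z : ℂ, z ≠ 0 → f z = 0 := by
    intro R k f L hR h0 hinfty
    have hdvd : (Polynomial.X : Polynomial ℂ) ^ k ∣ R := by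
      apply auxA k R L
      apply h0.congr'
      filter_upwards [hne0'] with z hz
      exact (hR z hz).symm
    obtain ⟨R1, hR1⟩ := hdvd
    have hR1eval : ∀ z : ℂ, z ≠ 0 → R1.eval z = z * f z := by
      intro z hz
      have h1 := hR z hz
      rw [hR1] at h1
      rwa [Polynomial.eval_mul, Polynomial.eval_pow, Polynomial.eval_X,
        mul_div_cancel_left₀ _ (pow_ne_zero k hz)] at h1
    have hR10 : R1 = 0 := by
      apply auxB
      apply hinfty.congr'
      filter_upwards [hne0] with z hz
      exact (hR1eval z hz).symm
    intro z hz
    have := hR1eval z hz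
    rw [hR10] at this
    simp at this
    rcases this with h | h
    · exact absurd h hz
    · exact h
  -- product identity
  have hprod_eq : ∀ z : ℂ, z ≠ 0 → E0 z * E1 z = γ := by
    have := pipeline (Polynomial.X * Q - Polynomial.C γ * Polynomial.X ^ (m+1)) m
      (fun z => E0 z * E1 z - γ) (0 * (α * β - γ)) ?_ hprodT0 hprodT
    · intro z hz; exact sub_eq_zero.mp (this z hz)
    · intro z hz
      show _ = z * (E0 z * E1 z - γ)
      rw [hQ z hz]
      simp only [Polynomial.eval_sub, Polynomial.eval_mul, Polynomial.eval_pow,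
        Polynomial.eval_X, Polynomial.eval_C]
      field_simp
      ring
  -- sum identity
  have hsum_eq : ∀ z : ℂ, z ≠ 0 → E0 z + E1 z = (γ + 1) - (1/z) * (γ - 1) := by
    have := pipeline
      (Polynomial.X * P - (Polynomial.C (γ+1) * Polynomial.X - Polynomial.C (γ-1)) *
        Polynomial.X ^ n) n
      (fun z => (E0 z + E1 z) - ((γ + 1) - (1/z) * (γ - 1)))
      ((0 * 0 * α + β) - (0 * (γ + 1) - (γ - 1))) ?_ hsumT0 hsumT
    · intro z hz; exact sub_eq_zero.mp (this z hz)
    · intro z hz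
      show _ = z * ((E0 z + E1 z) - ((γ + 1) - (1/z) * (γ - 1)))
      rw [hP z hz]
      simp only [Polynomial.eval_sub, Polynomial.eval_mul, Polynomial.eval_pow,
        Polynomial.eval_X, Polynomial.eval_C]
      field_simp
  intro z hz
  have hp := hprod_eq z hz
  have hs := hsum_eq z hz
  refine ⟨hp, hs, ?_, ?_⟩
  · linear_combination (E0 z) * hs - hp
  · linear_combination (E1 z) * hs - hp
end

section
/- The condition (σ1 + σ2 - 2)^2 = 2(σ1 - σ2)^2 with σj = 1/cj, 0 < c1, c2 < 1, is equivalent to c1 = c2(1 ± √2)/(2c2 - 1 ± √2) (with matching signs), i.e. the boundary of the domain N = {(c1,c2) ∈ (0,1)^2 : c2(1-√2)/(2c2 - 1 - √2) < c1 < c2(1+√2)/(2c2 - 1 + √2)}. -/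
/-- With `σj = 1/cj`, `0 < c1, c2 < 1`, the condition `(σ1+σ2-2)^2 = 2(σ1-σ2)^2`
is equivalent to `c1 = c2(1+√2)/(2c2 - 1 + √2)` or `c1 = c2(1-√2)/(2c2 - 1 - √2)`,
i.e. the boundary of the Nikishin domain. -/
theorem stmt10 (c1 c2 : ℝ) (hc1 : 0 < c1) (hc1' : c1 < 1) (hc2 : 0 < c2) (hc2' : c2 < 1)
    (σ1 σ2 : ℝ) (hσ1 : σ1 = 1/c1) (hσ2 : σ2 = 1/c2) :
    (σ1 + σ2 - 2)^2 = 2*(σ1 - σ2)^2 ↔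
      (c1 = c2*(1 + Real.sqrt 2)/(2*c2 - 1 + Real.sqrt 2) ∨
       c1 = c2*(1 - Real.sqrt 2)/(2*c2 - 1 - Real.sqrt 2)) := by
  subst hσ1 hσ2
  have hr2 : Real.sqrt 2 ^ 2 = 2 := Real.sq_sqrt (by norm_num)
  have hr1 : 1 < Real.sqrt 2 := by nlinarith [Real.sqrt_nonneg 2]
  set r := Real.sqrt 2 with hrdef
  have hd1 : 2*c2 - 1 + r ≠ 0 := by nlinarith
  have hd2 : 2*c2 - 1 - r ≠ 0 := by nlinarith
  have h1 : c1 ≠ 0 := hc1.ne'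
  have h2 : c2 ≠ 0 := hc2.ne'
  rw [show (2:ℝ)*(1/c1 - 1/c2)^2 = (r*(1/c1-1/c2))^2 by rw [mul_pow, hr2],
      sq_eq_sq_iff_eq_or_eq_neg, eq_div_iff hd1, eq_div_iff hd2]
  constructor
  · rintro (h | h)
    · right
      field_simp at h
      nlinarith [h]
    · left
      field_simp at h
      nlinarith [h]
  · rintro (h | h)
    · right
      field_simp
      nlinarith [h]
    · left
      field_simp
      nlinarith [h]
end

section
/- Let F(L) = 2 ln L + (1/(4L^2))(2L+b+b^2)(2L-b+b^2)(2L-1+b^2) · ln( ((2L+b+b^2)(2L-b+b^2))/((2L-1+b^2)^2) ) and t(L) = (1/4)(2L+b+b^2)(2L-b+b^2)(2L-1+b^2)/L^2. Then dF/dL divided by dt/dL equals ln( ((2L+b+b^2)(2L-b+b^2))/((2L-1+b^2)^2) ), i.e. (d/dt)F(L(t)) = ln φ where φ = (2L+b+b^2)(2L-b+b^2)/(2L-1+b^2)^2. -/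
/-- For `F(L) = 2 ln L + (1/(4L²))(2L+b+b²)(2L-b+b²)(2L-1+b²)·ln(((2L+b+b²)(2L-b+b²))/(2L-1+b²)²)`
and `t(L) = (1/4)(2L+b+b²)(2L-b+b²)(2L-1+b²)/L²`, the quotient `F'(L)/t'(L)` equals
`ln(((2L+b+b²)(2L-b+b²))/(2L-1+b²)²)`, i.e. `(d/dt)F(L(t)) = ln φ`. -/
theorem stmt16 (b : ℝ) (hb : 1 < b) (L : ℝ) (hL : 0 < L)
    (h1 : 0 < 2*L + b + b^2) (h2 : 0 < 2*L - b + b^2) (h3 : 0 < 2*L - 1 + b^2)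
    (F t : ℝ → ℝ)
    (hF : F = fun L => 2 * Real.log L +
      (1/(4*L^2)) * ((2*L + b + b^2)*(2*L - b + b^2)*(2*L - 1 + b^2)) *
        Real.log (((2*L + b + b^2)*(2*L - b + b^2))/((2*L - 1 + b^2)^2)))
    (ht : t = fun L => (1/4)*((2*L + b + b^2)*(2*L - b + b^2)*(2*L - 1 + b^2))/L^2)
    (hdt : deriv t L ≠ 0) :
    deriv F L / deriv t L =
      Real.log (((2*L + b + b^2)*(2*L - b + b^2))/((2*L - 1 + b^2)^2)) := by
  have hLne : L ≠ 0 := ne_of_gt hL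
  have hAne : (2*L + b + b^2) ≠ 0 := ne_of_gt h1
  have hBne : (2*L - b + b^2) ≠ 0 := ne_of_gt h2
  have hCne : (2*L - 1 + b^2) ≠ 0 := ne_of_gt h3
  -- basic building blocks
  have hA : HasDerivAt (fun x : ℝ => 2*x + b + b^2) 2 L := by
    simpa using (((hasDerivAt_id L).const_mul 2).add_const b).add_const (b^2)
  have hB : HasDerivAt (fun x : ℝ => 2*x - b + b^2) 2 L := by
    simpa using (((hasDerivAt_id L).const_mul 2).sub_const b).add_const (b^2)
  have hC : HasDerivAt (fun x : ℝ => 2*x - 1 + b^2) 2 L := by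
    simpa using (((hasDerivAt_id L).const_mul 2).sub_const 1).add_const (b^2)
  have hAB : HasDerivAt (fun x : ℝ => (2*x + b + b^2)*(2*x - b + b^2))
      (2*(2*L - b + b^2) + (2*L + b + b^2)*2) L := hA.mul hB
  have hP : HasDerivAt (fun x : ℝ => (2*x + b + b^2)*(2*x - b + b^2)*(2*x - 1 + b^2))
      ((2*(2*L - b + b^2) + (2*L + b + b^2)*2)*(2*L - 1 + b^2)
        + ((2*L + b + b^2)*(2*L - b + b^2))*2) L := hAB.mul hC
  have hC2 : HasDerivAt (fun x : ℝ => (2*x - 1 + b^2)^2) (2*(2*L - 1 + b^2)^1*2) L := hC.pow 2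
  have hC2ne : ((2*L - 1 + b^2)^2) ≠ 0 := pow_ne_zero _ hCne
  have hZ : HasDerivAt (fun x : ℝ => ((2*x + b + b^2)*(2*x - b + b^2))/((2*x - 1 + b^2)^2))
      (((2*(2*L - b + b^2) + (2*L + b + b^2)*2)*((2*L - 1 + b^2)^2)
        - ((2*L + b + b^2)*(2*L - b + b^2))*(2*(2*L - 1 + b^2)^1*2))/((2*L - 1 + b^2)^2)^2) L :=
    hAB.div hC2 hC2ne
  have hZne : ((2*L + b + b^2)*(2*L - b + b^2))/((2*L - 1 + b^2)^2) ≠ 0 := by positivity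
  have hlogZ := hZ.log hZne
  -- 4x^2 and its reciprocal
  have h4x2 : HasDerivAt (fun x : ℝ => 4*x^2) (4*(2*L^1)) L := by
    simpa using (hasDerivAt_pow 2 L).const_mul 4
  have h4x2ne : (4*L^2) ≠ 0 := by positivity
  have hq : HasDerivAt (fun x : ℝ => 1/(4*x^2))
      ((0*(4*L^2) - 1*(4*(2*L^1)))/(4*L^2)^2) L :=
    (hasDerivAt_const L 1).div h4x2 h4x2ne
  -- x^2
  have hx2 : HasDerivAt (fun x : ℝ => x^2) (2*L^1) L := by simpa using hasDerivAt_pow 2 L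
  have hx2ne : (L^2) ≠ 0 := pow_ne_zero _ hLne
  -- derivative of t
  have hT : HasDerivAt t
      (((1/4)*((2*(2*L - b + b^2) + (2*L + b + b^2)*2)*(2*L - 1 + b^2)
        + ((2*L + b + b^2)*(2*L - b + b^2))*2)*(L^2)
        - (1/4)*((2*L + b + b^2)*(2*L - b + b^2)*(2*L - 1 + b^2))*(2*L^1))/(L^2)^2) L := by
    rw [ht]
    exact (hP.const_mul (1/4)).div hx2 hx2ne
  -- derivative of F
  have hF1 : HasDerivAt (fun x : ℝ => 2 * Real.log x) (2 * L⁻¹) L :=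
    (Real.hasDerivAt_log hLne).const_mul 2
  have hF2 := ((hq.mul hP).mul hlogZ)
  have hFd : HasDerivAt F
      ((2 * L⁻¹) +
        ((((0*(4*L^2) - 1*(4*(2*L^1)))/(4*L^2)^2)*((2*L + b + b^2)*(2*L - b + b^2)*(2*L - 1 + b^2))
          + (1/(4*L^2))*((2*(2*L - b + b^2) + (2*L + b + b^2)*2)*(2*L - 1 + b^2)
            + ((2*L + b + b^2)*(2*L - b + b^2))*2))
          * Real.log (((2*L + b + b^2)*(2*L - b + b^2))/((2*L - 1 + b^2)^2))
        + ((1/(4*L^2))*((2*L + b + b^2)*(2*L - b + b^2)*(2*L - 1 + b^2)))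
          * ((((2*(2*L - b + b^2) + (2*L + b + b^2)*2)*((2*L - 1 + b^2)^2)
            - ((2*L + b + b^2)*(2*L - b + b^2))*(2*(2*L - 1 + b^2)^1*2))/((2*L - 1 + b^2)^2)^2)
            / (((2*L + b + b^2)*(2*L - b + b^2))/((2*L - 1 + b^2)^2))))) L := by
    rw [hF]
    exact hF1.add hF2
  rw [hFd.deriv, hT.deriv]
  rw [hT.deriv] at hdt
  set lZ := Real.log (((2*L + b + b^2)*(2*L - b + b^2))/((2*L - 1 + b^2)^2)) with hlZ
  have key : (2 * L⁻¹) +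
        ((((0*(4*L^2) - 1*(4*(2*L^1)))/(4*L^2)^2)*((2*L + b + b^2)*(2*L - b + b^2)*(2*L - 1 + b^2))
          + (1/(4*L^2))*((2*(2*L - b + b^2) + (2*L + b + b^2)*2)*(2*L - 1 + b^2)
            + ((2*L + b + b^2)*(2*L - b + b^2))*2))
          * lZ
        + ((1/(4*L^2))*((2*L + b + b^2)*(2*L - b + b^2)*(2*L - 1 + b^2)))
          * ((((2*(2*L - b + b^2) + (2*L + b + b^2)*2)*((2*L - 1 + b^2)^2)
            - ((2*L + b + b^2)*(2*L - b + b^2))*(2*(2*L - 1 + b^2)^1*2))/((2*L - 1 + b^2)^2)^2)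
            / (((2*L + b + b^2)*(2*L - b + b^2))/((2*L - 1 + b^2)^2))))
      = (((1/4)*((2*(2*L - b + b^2) + (2*L + b + b^2)*2)*(2*L - 1 + b^2)
        + ((2*L + b + b^2)*(2*L - b + b^2))*2)*(L^2)
        - (1/4)*((2*L + b + b^2)*(2*L - b + b^2)*(2*L - 1 + b^2))*(2*L^1))/(L^2)^2) * lZ := by
    field_simp
    ring
  rw [key, mul_div_cancel_left₀ _ hdt]
end
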